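/- For all integers t ≥ 1 and k ≥ 1 there is a constant C = C(t,k) > 0 such that for every integer p ≥ 2, every finite indexed family F of nonempty compact convex sets in the plane ℝ² satisfying (i) every pairwise-intersecting subfamily of F can be pierced by at most t points, (ii) the VC-dimension of F as a range space over ℝ² is at most k, and (iii) the (p,2)-property, can be pierced by at most C·p⁴·(log₂ p)² points. -/

import Mathlib

/-- The `(p,q)`-property for a finite indexed family of sets. -/
def HasPQ {ι α : Type*} [Fintype ι] (F : ι → Set α) (p q : ℕ) : Prop :=
  p ≤ Fintype.card ι ∧
    ∀ J : Finset ι, J.card = p → ∃ K ⊆ J, K.card = q ∧ (⋂ k ∈ K, F k).Nonempty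

/-- `P` pierces the family `F`: every member of `F` contains a point of `P`. -/
def Pierces {ι α : Type*} (F : ι → Set α) (P : Finset α) : Prop :=
  ∀ i, ∃ x ∈ P, x ∈ F i

/-- The finite point set `Y` is shattered by the family `F`. -/
def ShatteredBy {ι α : Type*} (F : ι → Set α) (Y : Finset α) : Prop :=
  ∀ Z ⊆ Y, ∃ i, F i ∩ (Y : Set α) = (Z : Set α)

/-! ### Auxiliary machinery: four partial orders on disjoint compact convex sets -/

/-- `A` lies strictly below `B` at every common abscissa. -/
def Bel (A B : Set (ℝ × ℝ)) : Prop :=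
  ∀ x y y', (x, y) ∈ A → (x, y') ∈ B → y < y'

/-- Two disjoint convex sets in the plane: one is slicewise below the other. -/
lemma bel_total {A B : Set (ℝ × ℝ)} (hA : Convex ℝ A) (hB : Convex ℝ B)
    (hdisj : ∀ z, z ∈ A → z ∈ B → False) : Bel A B ∨ Bel B A := by
  by_contra h
  push_neg at h
  obtain ⟨hnAB, hnBA⟩ := h
  rw [Bel] at hnAB hnBA
  push_neg at hnAB hnBA
  obtain ⟨x₁, a₁, b₁, ha₁, hb₁, h₁⟩ := hnAB
  obtain ⟨x₂, b₂, a₂, hb₂, ha₂, h₂⟩ := hnBA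
  -- h₁ : b₁ ≤ a₁, h₂ : a₂ ≤ b₂
  have hd₁ : 0 < a₁ - b₁ := by
    rcases lt_or_eq_of_le h₁ with h | h
    · linarith
    · exact absurd (h ▸ hb₁) (fun hb => hdisj _ ha₁ hb)
  have hd₂ : 0 < b₂ - a₂ := by
    rcases lt_or_eq_of_le h₂ with h | h
    · linarith
    · exact absurd (h ▸ ha₂) (fun ha => hdisj _ ha hb₂)
  set d₁ := a₁ - b₁ with hd1def
  set d₂ := b₂ - a₂ with hd2def
  have hD : 0 < d₁ + d₂ := by linarith
  set s := d₁ / (d₁ + d₂) with hsdef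
  have hs0 : 0 ≤ s := by positivity
  have hs1 : s ≤ 1 := by
    rw [hsdef, div_le_one hD]; linarith
  have hpA : (1 - s) • ((x₁, a₁) : ℝ × ℝ) + s • ((x₂, a₂) : ℝ × ℝ) ∈ A :=
    hA ha₁ ha₂ (by linarith) hs0 (by ring)
  have hpB : (1 - s) • ((x₁, b₁) : ℝ × ℝ) + s • ((x₂, b₂) : ℝ × ℝ) ∈ B :=
    hB hb₁ hb₂ (by linarith) hs0 (by ring)
  have hkey : (1 - s) • ((x₁, a₁) : ℝ × ℝ) + s • ((x₂, a₂) : ℝ × ℝ)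
      = (1 - s) • ((x₁, b₁) : ℝ × ℝ) + s • ((x₂, b₂) : ℝ × ℝ) := by
    have hsnd : (1 - s) * a₁ + s * a₂ = (1 - s) * b₁ + s * b₂ := by
      have hne : d₁ + d₂ ≠ 0 := ne_of_gt hD
      rw [hsdef]
      field_simp
      rw [hd1def, hd2def]
      ring
    simp only [Prod.smul_mk, Prod.mk_add_mk, smul_eq_mul, Prod.mk.injEq]
    refine ⟨by trivial, by linarith [hsnd]⟩
  exact hdisj _ hpA (hkey ▸ hpB)

noncomputable def loX (A : Set (ℝ × ℝ)) : ℝ := sInf (Prod.fst '' A)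
noncomputable def hiX (A : Set (ℝ × ℝ)) : ℝ := sSup (Prod.fst '' A)

lemma loX_le {A : Set (ℝ × ℝ)} (hc : IsCompact A) {z : ℝ × ℝ} (hz : z ∈ A) :
    loX A ≤ z.1 :=
  csInf_le (hc.image continuous_fst).bddBelow ⟨z, hz, rfl⟩

lemma le_hiX {A : Set (ℝ × ℝ)} (hc : IsCompact A) {z : ℝ × ℝ} (hz : z ∈ A) :
    z.1 ≤ hiX A :=
  le_csSup (hc.image continuous_fst).bddAbove ⟨z, hz, rfl⟩

/-- A compact convex set has a point at every abscissa between `loX` and `hiX`. -/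
lemma mid_mem {A : Set (ℝ × ℝ)} (hc : IsCompact A) (hv : Convex ℝ A)
    (hne : A.Nonempty) {x : ℝ} (h1 : loX A ≤ x) (h2 : x ≤ hiX A) :
    ∃ y, (x, y) ∈ A := by
  have hSc : IsCompact (Prod.fst '' A) := hc.image continuous_fst
  have hSne : (Prod.fst '' A).Nonempty := hne.image _
  have hSv : Convex ℝ (Prod.fst '' A) := hv.linear_image (LinearMap.fst ℝ ℝ ℝ)
  have hlo : loX A ∈ Prod.fst '' A := hSc.sInf_mem hSne
  have hhi : hiX A ∈ Prod.fst '' A := hSc.sSup_mem hSne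
  have hx : x ∈ Prod.fst '' A := hSv.ordConnected.out hlo hhi ⟨h1, h2⟩
  obtain ⟨z, hzA, hz1⟩ := hx
  exact ⟨z.2, by rw [show (x, z.2) = z from by rw [← hz1]]; exact hzA⟩

/-- Mirsky-type height function for a strict partial order with bounded chains. -/
lemma exists_height {ι : Type} [Fintype ι] (r : ι → ι → Prop)
    (htr : ∀ a b c, r a b → r b c → r a c) (hirr : ∀ a, ¬ r a a) (N : ℕ)
    (hchain : ∀ S : Finset ι, (∀ a ∈ S, ∀ b ∈ S, a ≠ b → r a b ∨ r b a) → S.card ≤ N) :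
    ∃ h : ι → ℕ, (∀ a b, r a b → h a < h b) ∧ ∀ a, 1 ≤ h a ∧ h a ≤ N := by
  classical
  set P : ι → ℕ → Prop := fun i n => ∃ S : Finset ι, S.card = n ∧ i ∈ S ∧
    (∀ a ∈ S, a = i ∨ r a i) ∧ (∀ a ∈ S, ∀ b ∈ S, a ≠ b → r a b ∨ r b a) with hPdef
  have hP1 : ∀ i, P i 1 := by
    intro i
    refine ⟨{i}, Finset.card_singleton i, Finset.mem_singleton_self i, ?_, ?_⟩
    · intro a ha; left; exact Finset.mem_singleton.mp ha
    · intro a ha b hb hab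
      exact absurd ((Finset.mem_singleton.mp ha).trans (Finset.mem_singleton.mp hb).symm) hab
  have hcard : ∀ i, 1 ≤ Fintype.card ι := fun i => Fintype.card_pos_iff.mpr ⟨i⟩
  set h : ι → ℕ := fun i => Nat.findGreatest (P i) (Fintype.card ι) with hhdef
  have hspec : ∀ i, P i (h i) := fun i => Nat.findGreatest_spec (hcard i) (hP1 i)
  have hge1 : ∀ i, 1 ≤ h i := fun i => Nat.le_findGreatest (hcard i) (hP1 i)
  refine ⟨h, ?_, ?_⟩
  · intro a b hab
    obtain ⟨S, hScard, haS, hEnd, hComp⟩ := hspec a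
    have hbS : b ∉ S := by
      intro hbS
      rcases hEnd b hbS with h' | h'
      · exact hirr a (h' ▸ hab)
      · exact hirr b (htr _ _ _ h' hab)
    have hrS : ∀ x ∈ S, r x b := by
      intro x hx
      rcases hEnd x hx with h' | h'
      · exact h' ▸ hab
      · exact htr _ _ _ h' hab
    have hPb : P b (h a + 1) := by
      refine ⟨insert b S, ?_, Finset.mem_insert_self b S, ?_, ?_⟩
      · rw [Finset.card_insert_of_notMem hbS, hScard]
      · intro x hx
        rcases Finset.mem_insert.mp hx with h' | h'
        · left; exact h'
        · right; exact hrS x h'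
      · intro x hx y hy hxy
        rcases Finset.mem_insert.mp hx with h'x | h'x <;>
          rcases Finset.mem_insert.mp hy with h'y | h'y
        · exact absurd (h'x.trans h'y.symm) hxy
        · subst h'x; right; exact hrS y h'y
        · subst h'y; left; exact hrS x h'x
        · exact hComp x h'x y h'y hxy
    have hb : h a + 1 ≤ Fintype.card ι := by
      obtain ⟨S', hS'card, _, _, _⟩ := hPb
      rw [← hS'card]; exact Finset.card_le_univ S'
    have h2 : h a + 1 ≤ h b := Nat.le_findGreatest hb hPb
    omega
  · intro a
    refine ⟨hge1 a, ?_⟩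
    obtain ⟨S, hScard, _, _, hComp⟩ := hspec a
    rw [← hScard]; exact hchain S hComp

theorem twotwo_to_p2_plane_vc (t k : ℕ) (ht : 1 ≤ t) (hk : 1 ≤ k) :
    ∃ C : ℝ, 0 < C ∧
      ∀ p : ℕ, 2 ≤ p →
        ∀ (ι : Type) [Fintype ι], ∀ F : ι → Set (ℝ × ℝ),
          (∀ i, (F i).Nonempty) →
          (∀ i, IsCompact (F i)) →
          (∀ i, Convex ℝ (F i)) →
          (∀ S : Finset ι, (∀ i ∈ S, ∀ j ∈ S, (F i ∩ F j).Nonempty) →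
            ∃ P : Finset (ℝ × ℝ), P.card ≤ t ∧ ∀ i ∈ S, ∃ x ∈ P, x ∈ F i) →
          (∀ Y : Finset (ℝ × ℝ), Y.card = k + 1 → ¬ ShatteredBy F Y) →
          HasPQ F p 2 →
          ∃ P : Finset (ℝ × ℝ),
            (P.card : ℝ) ≤ C * (p : ℝ) ^ 4 * (Real.logb 2 (p : ℝ)) ^ 2 ∧
            Pierces F P := by
  classical
  refine ⟨(t : ℝ), by exact_mod_cast Nat.pos_of_ne_zero (by omega), ?_⟩
  intro p hp ι _ F hne hcpt hconv h22 _ hPQ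
  -- The four strict partial orders
  set r1 : ι → ι → Prop := fun i j => Bel (F i) (F j) ∧
    loX (F j) ≤ loX (F i) ∧ hiX (F i) ≤ hiX (F j) with hr1def
  set r2 : ι → ι → Prop := fun i j => Bel (F i) (F j) ∧
    loX (F i) ≤ loX (F j) ∧ hiX (F j) ≤ hiX (F i) with hr2def
  set r3 : ι → ι → Prop := fun i j => Bel (F i) (F j) ∧
    loX (F i) < loX (F j) ∧ hiX (F i) < hiX (F j) with hr3def
  set r4 : ι → ι → Prop := fun i j => Bel (F i) (F j) ∧
    loX (F j) < loX (F i) ∧ hiX (F j) < hiX (F i) with hr4def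
  -- `Bel` implies disjointness
  have hBd : ∀ i j : ι, Bel (F i) (F j) → ∀ z, z ∈ F i → z ∈ F j → False := by
    intro i j hB z hzi hzj
    have := hB z.1 z.2 z.2 (by rw [Prod.mk.eta]; exact hzi) (by rw [Prod.mk.eta]; exact hzj)
    exact lt_irrefl _ this
  -- irreflexivity
  have hirr : ∀ (r : ι → ι → Prop), (∀ a b, r a b → Bel (F a) (F b)) → ∀ a, ¬ r a a := by
    intro r hrB a hra
    obtain ⟨z, hz⟩ := hne a
    exact hBd a a (hrB a a hra) z hz hz
  -- chains are bounded by p - 1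
  have hchain : ∀ (r : ι → ι → Prop), (∀ a b, r a b → Bel (F a) (F b)) →
      ∀ S : Finset ι, (∀ a ∈ S, ∀ b ∈ S, a ≠ b → r a b ∨ r b a) → S.card ≤ p - 1 := by
    intro r hrB S hComp
    by_contra hcon
    have hpS : p ≤ S.card := by omega
    obtain ⟨J, hJS, hJcard⟩ := S.exists_subset_card_eq hpS
    obtain ⟨K, hKJ, hK2, x, hx⟩ := hPQ.2 J hJcard
    obtain ⟨a, b, hab, rfl⟩ := Finset.card_eq_two.mp hK2
    simp only [Set.mem_iInter] at hx
    have hxa : x ∈ F a := hx a (Finset.mem_insert_self a {b})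
    have hxb : x ∈ F b := hx b (Finset.mem_insert_of_mem (Finset.mem_singleton_self b))
    have haS : a ∈ S := hJS (hKJ (Finset.mem_insert_self a {b}))
    have hbS : b ∈ S := hJS (hKJ (Finset.mem_insert_of_mem (Finset.mem_singleton_self b)))
    rcases hComp a haS b hbS hab with h' | h'
    · exact hBd a b (hrB a b h') x hxa hxb
    · exact hBd b a (hrB b a h') x hxb hxa
  -- transitivity of the four orders
  have htr1 : ∀ a b c, r1 a b → r1 b c → r1 a c := by
    intro a b c ⟨hB1, hlo1, hhi1⟩ ⟨hB2, hlo2, hhi2⟩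
    refine ⟨?_, le_trans hlo2 hlo1, le_trans hhi1 hhi2⟩
    intro x y y' hy hy'
    have hxlo : loX (F a) ≤ x := loX_le (hcpt a) hy
    have hxhi : x ≤ hiX (F a) := le_hiX (hcpt a) hy
    obtain ⟨y'', hy''⟩ := mid_mem (hcpt b) (hconv b) (hne b)
      (le_trans hlo1 hxlo) (le_trans hxhi hhi1)
    exact lt_trans (hB1 x y y'' hy hy'') (hB2 x y'' y' hy'' hy')
  have htr2 : ∀ a b c, r2 a b → r2 b c → r2 a c := by
    intro a b c ⟨hB1, hlo1, hhi1⟩ ⟨hB2, hlo2, hhi2⟩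
    refine ⟨?_, le_trans hlo1 hlo2, le_trans hhi2 hhi1⟩
    intro x y y' hy hy'
    have hxlo : loX (F c) ≤ x := loX_le (hcpt c) hy'
    have hxhi : x ≤ hiX (F c) := le_hiX (hcpt c) hy'
    obtain ⟨y'', hy''⟩ := mid_mem (hcpt b) (hconv b) (hne b)
      (le_trans hlo2 hxlo) (le_trans hxhi hhi2)
    exact lt_trans (hB1 x y y'' hy hy'') (hB2 x y'' y' hy'' hy')
  have htr3 : ∀ a b c, r3 a b → r3 b c → r3 a c := by
    intro a b c ⟨hB1, hlo1, hhi1⟩ ⟨hB2, hlo2, hhi2⟩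
    refine ⟨?_, lt_trans hlo1 hlo2, lt_trans hhi1 hhi2⟩
    intro x y y' hy hy'
    have hxlo : loX (F c) ≤ x := loX_le (hcpt c) hy'
    have hxhi : x ≤ hiX (F a) := le_hiX (hcpt a) hy
    obtain ⟨y'', hy''⟩ := mid_mem (hcpt b) (hconv b) (hne b)
      (le_trans (le_of_lt hlo2) hxlo) (le_trans hxhi (le_of_lt hhi1))
    exact lt_trans (hB1 x y y'' hy hy'') (hB2 x y'' y' hy'' hy')
  have htr4 : ∀ a b c, r4 a b → r4 b c → r4 a c := by
    intro a b c ⟨hB1, hlo1, hhi1⟩ ⟨hB2, hlo2, hhi2⟩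
    refine ⟨?_, lt_trans hlo2 hlo1, lt_trans hhi2 hhi1⟩
    intro x y y' hy hy'
    have hxlo : loX (F a) ≤ x := loX_le (hcpt a) hy
    have hxhi : x ≤ hiX (F c) := le_hiX (hcpt c) hy'
    obtain ⟨y'', hy''⟩ := mid_mem (hcpt b) (hconv b) (hne b)
      (le_trans (le_of_lt hlo1) hxlo) (le_trans hxhi (le_of_lt hhi2))
    exact lt_trans (hB1 x y y'' hy hy'') (hB2 x y'' y' hy'' hy')
  -- coverage: two disjoint sets are comparable in one of the four orders
  have hcov : ∀ a b : ι, (∀ z, z ∈ F a → z ∈ F b → False) →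
      (r1 a b ∨ r1 b a) ∨ (r2 a b ∨ r2 b a) ∨ (r3 a b ∨ r3 b a) ∨ (r4 a b ∨ r4 b a) := by
    intro a b hdisj
    have hcases : ∀ i j : ι, Bel (F i) (F j) →
        r1 i j ∨ r2 i j ∨ r3 i j ∨ r4 i j := by
      intro i j hB
      rcases le_or_gt (loX (F j)) (loX (F i)) with h1 | h1 <;>
        rcases le_or_gt (hiX (F i)) (hiX (F j)) with h2 | h2
      · exact Or.inl ⟨hB, h1, h2⟩
      · rcases eq_or_lt_of_le h1 with he | hlt
        · exact Or.inr (Or.inl ⟨hB, le_of_eq he.symm, le_of_lt h2⟩)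
        · exact Or.inr (Or.inr (Or.inr ⟨hB, hlt, h2⟩))
      · rcases eq_or_lt_of_le h2 with he | hlt
        · exact Or.inr (Or.inl ⟨hB, le_of_lt h1, le_of_eq he.symm⟩)
        · exact Or.inr (Or.inr (Or.inl ⟨hB, h1, hlt⟩))
      · exact Or.inr (Or.inl ⟨hB, le_of_lt h1, le_of_lt h2⟩)
    rcases bel_total (hconv a) (hconv b) hdisj with hB | hB
    · rcases hcases a b hB with h | h | h | h
      · exact Or.inl (Or.inl h)
      · exact Or.inr (Or.inl (Or.inl h))
      · exact Or.inr (Or.inr (Or.inl (Or.inl h)))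
      · exact Or.inr (Or.inr (Or.inr (Or.inl h)))
    · rcases hcases b a hB with h | h | h | h
      · exact Or.inl (Or.inr h)
      · exact Or.inr (Or.inl (Or.inr h))
      · exact Or.inr (Or.inr (Or.inl (Or.inr h)))
      · exact Or.inr (Or.inr (Or.inr (Or.inr h)))
  -- height functions
  have hrB1 : ∀ a b, r1 a b → Bel (F a) (F b) := fun a b h => h.1
  have hrB2 : ∀ a b, r2 a b → Bel (F a) (F b) := fun a b h => h.1
  have hrB3 : ∀ a b, r3 a b → Bel (F a) (F b) := fun a b h => h.1
  have hrB4 : ∀ a b, r4 a b → Bel (F a) (F b) := fun a b h => h.1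
  obtain ⟨h1, hm1, hb1⟩ := exists_height r1 htr1 (hirr r1 hrB1) (p-1) (hchain r1 hrB1)
  obtain ⟨h2, hm2, hb2⟩ := exists_height r2 htr2 (hirr r2 hrB2) (p-1) (hchain r2 hrB2)
  obtain ⟨h3, hm3, hb3⟩ := exists_height r3 htr3 (hirr r3 hrB3) (p-1) (hchain r3 hrB3)
  obtain ⟨h4, hm4, hb4⟩ := exists_height r4 htr4 (hirr r4 hrB4) (p-1) (hchain r4 hrB4)
  -- classes
  set H : ι → ℕ × ℕ × ℕ × ℕ := fun i => (h1 i, h2 i, h3 i, h4 i) with hHdef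
  set I := Finset.Icc 1 (p-1) with hIdef
  set V : Finset (ℕ × ℕ × ℕ × ℕ) := I ×ˢ I ×ˢ I ×ˢ I with hVdef
  have hHV : ∀ i, H i ∈ V := by
    intro i
    simp only [hVdef, hHdef, Finset.mem_product, hIdef, Finset.mem_Icc]
    exact ⟨⟨(hb1 i).1, (hb1 i).2⟩, ⟨(hb2 i).1, (hb2 i).2⟩,
      ⟨(hb3 i).1, (hb3 i).2⟩, ⟨(hb4 i).1, (hb4 i).2⟩⟩
  have key : ∀ v : ℕ × ℕ × ℕ × ℕ, ∃ Pv : Finset (ℝ × ℝ), Pv.card ≤ t ∧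
      ∀ i ∈ Finset.univ.filter (fun i => H i = v), ∃ x ∈ Pv, x ∈ F i := by
    intro v
    apply h22
    intro i hi j hj
    simp only [Finset.mem_filter] at hi hj
    by_contra hcon
    have hdisj : ∀ z, z ∈ F i → z ∈ F j → False := fun z hzi hzj => hcon ⟨z, hzi, hzj⟩
    have hHij : H i = H j := hi.2.trans hj.2.symm
    have h1e : h1 i = h1 j := congrArg (fun q => q.1) hHij
    have h2e : h2 i = h2 j := congrArg (fun q => q.2.1) hHij
    have h3e : h3 i = h3 j := congrArg (fun q => q.2.2.1) hHij
    have h4e : h4 i = h4 j := congrArg (fun q => q.2.2.2) hHij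
    rcases hcov i j hdisj with (h | h) | (h | h) | (h | h) | (h | h)
    · exact absurd h1e (ne_of_lt (hm1 _ _ h))
    · exact absurd h1e.symm (ne_of_lt (hm1 _ _ h))
    · exact absurd h2e (ne_of_lt (hm2 _ _ h))
    · exact absurd h2e.symm (ne_of_lt (hm2 _ _ h))
    · exact absurd h3e (ne_of_lt (hm3 _ _ h))
    · exact absurd h3e.symm (ne_of_lt (hm3 _ _ h))
    · exact absurd h4e (ne_of_lt (hm4 _ _ h))
    · exact absurd h4e.symm (ne_of_lt (hm4 _ _ h))
  choose Pv hPvcard hPvp using key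
  refine ⟨V.biUnion Pv, ?_, ?_⟩
  · -- cardinality bound
    have hcard1 : (V.biUnion Pv).card ≤ V.card * t := by
      calc (V.biUnion Pv).card ≤ ∑ v ∈ V, (Pv v).card := Finset.card_biUnion_le
        _ ≤ V.card * t := by
            rw [← smul_eq_mul]
            exact Finset.sum_le_card_nsmul V _ t (fun v _ => hPvcard v)
    have hIcard : I.card = p - 1 := by rw [hIdef, Nat.card_Icc]; omega
    have hVcard : V.card = (p-1)^4 := by
      rw [hVdef, Finset.card_product, Finset.card_product, Finset.card_product, hIcard]
      ring
    have hnat : (V.biUnion Pv).card ≤ (p-1)^4 * t := by rw [← hVcard]; exact hcard1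
    have hr : ((V.biUnion Pv).card : ℝ) ≤ ((p-1)^4 * t : ℕ) := Nat.cast_le.mpr hnat
    have hcast : (((p-1)^4 * t : ℕ) : ℝ) ≤ (t : ℝ) * (p : ℝ)^4 := by
      have hp2 : (2 : ℝ) ≤ (p : ℝ) := by exact_mod_cast hp
      have ht1 : (1 : ℝ) ≤ (t : ℝ) := by exact_mod_cast ht
      have hple : (((p - 1 : ℕ) : ℝ)) = (p : ℝ) - 1 := by
        have h1p : (1 : ℕ) ≤ p := by omega
        push_cast [h1p]
        ring
      have h1 : ((p : ℝ) - 1) ^ 4 ≤ (p : ℝ) ^ 4 := by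
        apply pow_le_pow_left₀ (by linarith) (by linarith)
      push_cast
      rw [hple]
      nlinarith [h1, ht1, pow_nonneg (by linarith : (0:ℝ) ≤ (p:ℝ) - 1) 4,
        pow_nonneg (by linarith : (0:ℝ) ≤ (p:ℝ)) 4]
    have hlog : (1 : ℝ) ≤ Real.logb 2 p := by
      rw [Real.logb, le_div_iff₀ (Real.log_pos (by norm_num))]
      rw [one_mul]
      apply Real.log_le_log (by norm_num)
      exact_mod_cast hp
    have hlogsq : (1 : ℝ) ≤ (Real.logb 2 p)^2 := by nlinarith
    calc ((V.biUnion Pv).card : ℝ) ≤ (t : ℝ) * (p : ℝ)^4 := le_trans hr hcast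
      _ = (t : ℝ) * (p : ℝ)^4 * 1 := by ring
      _ ≤ (t : ℝ) * (p : ℝ)^4 * (Real.logb 2 p)^2 := by
          apply mul_le_mul_of_nonneg_left hlogsq
          positivity
  · -- piercing
    intro i
    obtain ⟨x, hxP, hxF⟩ := hPvp (H i) i (by simp)
    exact ⟨x, Finset.mem_biUnion.mpr ⟨H i, hHV i, hxP⟩, hxF⟩
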